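/- arXiv:1803.05614 — 3 statements merged into one kernel-verified Lean document; each statement's English description precedes it below -/
import Mathlib

section
/- Let Ω₀ = {P₁,P₂,P₃,P₄} as in the Demyanov–Ryabova counterexample. For any g = (g_x,g_y) with g_x = 0 and g_y < 0, the polytope P_{Ω₀}(g) equals the segment conv{(-2,0),(2,0)}. -/
open Set

noncomputable section

/-- Standard inner product on ℝ². -/
def dot2 (v g : ℝ × ℝ) : ℝ := v.1 * g.1 + v.2 * g.2

/-- Argmax of the linear functional ⟨·,g⟩ over P. -/
def argmax2 (P : Set (ℝ × ℝ)) (g : ℝ × ℝ) : Set (ℝ × ℝ) :=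
  {v ∈ P | ∀ u ∈ P, dot2 u g ≤ dot2 v g}

/-- P_Ω(g) = conv ⋃_{P∈Ω} Argmax_{v∈P}⟨v,g⟩. -/
def polyConv (Ω : Set (Set (ℝ × ℝ))) (g : ℝ × ℝ) : Set (ℝ × ℝ) :=
  convexHull ℝ (⋃ P ∈ Ω, argmax2 P g)

def P1 : Set (ℝ × ℝ) := convexHull ℝ {(1, 0), (1, 1), (-1, 0)}
def P2 : Set (ℝ × ℝ) := convexHull ℝ {(-1, 0), (-1, 1), (1, 0)}
def P3 : Set (ℝ × ℝ) := convexHull ℝ {(1, 2), (-1, 2), (0, 0)}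
def P4 : Set (ℝ × ℝ) := convexHull ℝ {(2, 0), (-2, 0)}

def Ω0 : Set (Set (ℝ × ℝ)) := {P1, P2, P3, P4}

/-- Reflection through the y-axis. -/
def σ2 : ℝ × ℝ → ℝ × ℝ := fun p => (-p.1, p.2)

lemma hull_le (a b c : ℝ) (S : Set (ℝ × ℝ)) (h : ∀ s ∈ S, a * s.1 + b * s.2 ≤ c) :
    ∀ v ∈ convexHull ℝ S, a * v.1 + b * v.2 ≤ c := by
  have hlin : IsLinearMap ℝ (fun p : ℝ × ℝ => a * p.1 + b * p.2) := by
    constructor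
    · intro p q; simp; ring
    · intro t p; simp; ring
  have : convexHull ℝ S ⊆ {p : ℝ × ℝ | a * p.1 + b * p.2 ≤ c} :=
    convexHull_min h (convex_halfSpace_le hlin c)
  exact fun v hv => this hv

lemma memSeg (x : ℝ) (h1 : -2 ≤ x) (h2 : x ≤ 2) :
    ((x, 0) : ℝ × ℝ) ∈ convexHull ℝ ({(-2, 0), (2, 0)} : Set (ℝ × ℝ)) := by
  rw [convexHull_pair]
  refine ⟨(2 - x) / 4, (x + 2) / 4, by linarith, by linarith, by ring, ?_⟩
  simp [Prod.ext_iff]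
  ring

theorem stmt7 (g : ℝ × ℝ) (hx : g.1 = 0) (hy : g.2 < 0) :
    polyConv Ω0 g = convexHull ℝ {(-2, 0), (2, 0)} := by
  apply le_antisymm
  · -- ⊆
    apply convexHull_min _ (convex_convexHull ℝ _)
    intro v hv
    rcases mem_iUnion₂.mp hv with ⟨P, hP, hvP⟩
    obtain ⟨hvmem, hmax⟩ := hvP
    rcases hP with h | h | h | h
    · -- P1
      subst h
      have hylb := hull_le 0 (-1) 0 _ (by rintro s (rfl | rfl | rfl) <;> norm_num) v hvmem
      have hxub := hull_le 1 0 1 _ (by rintro s (rfl | rfl | rfl) <;> norm_num) v hvmem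
      have hxlb := hull_le (-1) 0 1 _ (by rintro s (rfl | rfl | rfl) <;> norm_num) v hvmem
      have hu : ((1 : ℝ), (0 : ℝ)) ∈ P1 := subset_convexHull ℝ _ (by left; rfl)
      have h0 := hmax _ hu
      simp only [dot2, hx] at h0
      have hy0 : v.2 = 0 := by nlinarith
      have : v = (v.1, 0) := by rw [Prod.ext_iff]; exact ⟨rfl, hy0⟩
      rw [this]
      exact memSeg v.1 (by linarith) (by linarith)
    · -- P2
      subst h
      have hylb := hull_le 0 (-1) 0 _ (by rintro s (rfl | rfl | rfl) <;> norm_num) v hvmem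
      have hxub := hull_le 1 0 1 _ (by rintro s (rfl | rfl | rfl) <;> norm_num) v hvmem
      have hxlb := hull_le (-1) 0 1 _ (by rintro s (rfl | rfl | rfl) <;> norm_num) v hvmem
      have hu : ((1 : ℝ), (0 : ℝ)) ∈ P2 := subset_convexHull ℝ _ (by right; right; rfl)
      have h0 := hmax _ hu
      simp only [dot2, hx] at h0
      have hy0 : v.2 = 0 := by nlinarith
      have : v = (v.1, 0) := by rw [Prod.ext_iff]; exact ⟨rfl, hy0⟩
      rw [this]
      exact memSeg v.1 (by linarith) (by linarith)
    · -- P3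
      subst h
      have hylb := hull_le 0 (-1) 0 _ (by rintro s (rfl | rfl | rfl) <;> norm_num) v hvmem
      have hxub := hull_le 2 (-1) 0 _ (by rintro s (rfl | rfl | rfl) <;> norm_num) v hvmem
      have hxlb := hull_le (-2) (-1) 0 _ (by rintro s (rfl | rfl | rfl) <;> norm_num) v hvmem
      have hu : ((0 : ℝ), (0 : ℝ)) ∈ P3 := subset_convexHull ℝ _ (by right; right; rfl)
      have h0 := hmax _ hu
      simp only [dot2, hx] at h0
      have hy0 : v.2 = 0 := by nlinarith
      have : v = (v.1, 0) := by rw [Prod.ext_iff]; exact ⟨rfl, hy0⟩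
      rw [this]
      exact memSeg v.1 (by linarith) (by linarith)
    · -- P4
      subst h
      have hyub := hull_le 0 1 0 _ (by rintro s (rfl | rfl) <;> norm_num) v hvmem
      have hylb := hull_le 0 (-1) 0 _ (by rintro s (rfl | rfl) <;> norm_num) v hvmem
      have hxub := hull_le 1 0 2 _ (by rintro s (rfl | rfl) <;> norm_num) v hvmem
      have hxlb := hull_le (-1) 0 2 _ (by rintro s (rfl | rfl) <;> norm_num) v hvmem
      have : v = (v.1, 0) := by rw [Prod.ext_iff]; exact ⟨rfl, by show v.2 = 0; linarith⟩
      rw [this]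
      exact memSeg v.1 (by linarith) (by linarith)
  · -- ⊇
    apply convexHull_min _ (convex_convexHull ℝ _)
    have hP4 : P4 ∈ Ω0 := by right; right; right; rfl
    have hkey : ∀ x : ℝ, ((x, 0) : ℝ × ℝ) ∈ P4 → (x, 0) ∈ polyConv Ω0 g := by
      intro x hxm
      apply subset_convexHull
      apply mem_iUnion₂.mpr
      refine ⟨P4, hP4, hxm, ?_⟩
      intro u hu
      have hylb := hull_le 0 (-1) 0 _ (by rintro s (rfl | rfl) <;> norm_num) u hu
      simp only [dot2, hx]
      nlinarith
    rintro p (rfl | rfl)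
    · exact hkey (-2) (subset_convexHull ℝ _ (by right; rfl))
    · exact hkey 2 (subset_convexHull ℝ _ (by left; rfl))
end
end

section
/- Let Ω₀ = {P₁,P₂,P₃,P₄} as in the Demyanov–Ryabova counterexample. For any g = (g_x,g_y) with g_x > 0 and g_y = -g_x/2, the polytope P_{Ω₀}(g) equals conv{(0,0),(1,2),(2,0)}. -/
open Set

noncomputable section

lemma mem_tri {A B C p : ℝ × ℝ} (h : p ∈ convexHull ℝ ({A, B, C} : Set (ℝ × ℝ))) :
    ∃ a b c : ℝ, 0 ≤ a ∧ 0 ≤ b ∧ 0 ≤ c ∧ a + b + c = 1 ∧ a • A + b • B + c • C = p := by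
  rw [convexHull_insert (by simp), convexHull_pair, mem_convexJoin] at h
  obtain ⟨x, hx, z, hz, hp⟩ := h
  rw [mem_singleton_iff] at hx
  subst hx
  obtain ⟨b, c, hb, hc, hbc, rfl⟩ := hz
  obtain ⟨a, d, ha, hd, had, hp⟩ := hp
  exact ⟨a, d*b, d*c, ha, by positivity, by positivity, by nlinarith, by rw [← hp]; module⟩

lemma hull_bound {S : Set (ℝ × ℝ)} {g : ℝ × ℝ} {c : ℝ} (h : ∀ v ∈ S, dot2 v g ≤ c) :
    ∀ v ∈ convexHull ℝ S, dot2 v g ≤ c := by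
  have hconv : Convex ℝ {v : ℝ × ℝ | dot2 v g ≤ c} := by
    apply convex_halfSpace_le
    exact ⟨fun x y => by simp [dot2]; ring, fun r x => by simp [dot2]; ring⟩
  exact fun v hv => convexHull_min h hconv hv

theorem stmt9 (g : ℝ × ℝ) (hx : 0 < g.1) (hy : g.2 = -g.1 / 2) :
    polyConv Ω0 g = convexHull ℝ {(0, 0), (1, 2), (2, 0)} := by
  have h1 : argmax2 P1 g = {((1:ℝ), (0:ℝ))} := by
    have h10 : ((1:ℝ), (0:ℝ)) ∈ P1 := subset_convexHull ℝ _ (by simp)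
    ext v
    simp only [argmax2, mem_setOf_eq, mem_singleton_iff]
    constructor
    · rintro ⟨hv, hmax⟩
      have hge := hmax _ h10
      obtain ⟨a, b, c, ha, hb, hc, habc, hcomb⟩ := mem_tri hv
      have hv1 : v.1 = a + b - c := by
        have := congrArg Prod.fst hcomb; simp at this; linarith
      have hv2 : v.2 = b := by
        have := congrArg Prod.snd hcomb; simp at this; linarith
      simp only [dot2, hy] at hge
      rw [hv1, hv2] at hge
      have hb0 : b = 0 := by nlinarith
      have hc0 : c = 0 := by nlinarith
      have : a = 1 := by linarith
      have e1 : v.1 = 1 := by rw [hv1]; linarith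
      have e2 : v.2 = 0 := by rw [hv2]; linarith
      exact Prod.ext e1 e2
    · rintro rfl
      refine ⟨h10, fun u hu => ?_⟩
      refine hull_bound (c := dot2 (1, 0) g) ?_ u hu
      rintro w (rfl | rfl | rfl) <;> simp [dot2, hy] <;> linarith
  have h2 : argmax2 P2 g = {((1:ℝ), (0:ℝ))} := by
    have h10 : ((1:ℝ), (0:ℝ)) ∈ P2 := subset_convexHull ℝ _ (by simp)
    ext v
    simp only [argmax2, mem_setOf_eq, mem_singleton_iff]
    constructor
    · rintro ⟨hv, hmax⟩
      have hge := hmax _ h10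
      obtain ⟨a, b, c, ha, hb, hc, habc, hcomb⟩ := mem_tri hv
      have hv1 : v.1 = -a - b + c := by
        have := congrArg Prod.fst hcomb; simp at this; linarith
      have hv2 : v.2 = b := by
        have := congrArg Prod.snd hcomb; simp at this; linarith
      simp only [dot2, hy] at hge
      rw [hv1, hv2] at hge
      have ha0 : a = 0 := by nlinarith
      have hb0 : b = 0 := by nlinarith
      have : c = 1 := by linarith
      have e1 : v.1 = 1 := by rw [hv1]; linarith
      have e2 : v.2 = 0 := by rw [hv2]; linarith
      exact Prod.ext e1 e2
    · rintro rfl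
      refine ⟨h10, fun u hu => ?_⟩
      refine hull_bound (c := dot2 (1, 0) g) ?_ u hu
      rintro w (rfl | rfl | rfl) <;> simp [dot2, hy] <;> linarith
  have h3 : argmax2 P3 g = segment ℝ ((0:ℝ), (0:ℝ)) ((1:ℝ), (2:ℝ)) := by
    have hsub : segment ℝ ((0:ℝ), (0:ℝ)) ((1:ℝ), (2:ℝ)) ⊆ P3 := by
      rw [← convexHull_pair]
      exact convexHull_mono (by intro w hw; rcases hw with rfl | rfl <;> simp)
    have h00 : ((0:ℝ), (0:ℝ)) ∈ P3 := subset_convexHull ℝ _ (by simp)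
    ext v
    simp only [argmax2, mem_setOf_eq]
    constructor
    · rintro ⟨hv, hmax⟩
      have hge := hmax _ h00
      obtain ⟨a, b, c, ha, hb, hc, habc, hcomb⟩ := mem_tri hv
      have hv1 : v.1 = a - b := by
        have := congrArg Prod.fst hcomb; simp at this; linarith
      have hv2 : v.2 = 2*a + 2*b := by
        have := congrArg Prod.snd hcomb; simp at this; linarith
      simp only [dot2, hy] at hge
      rw [hv1, hv2] at hge
      have hb0 : b = 0 := by nlinarith
      refine ⟨c, a, hc, ha, by linarith, ?_⟩
      refine Prod.ext ?_ ?_ <;> simp [hv1, hv2, hb0] <;> ring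
    · intro hv
      have hval : dot2 v g = 0 := by
        obtain ⟨s, r, hs, hr, hsr, hcomb⟩ := hv
        have hv1 : v.1 = r := by
          have := congrArg Prod.fst hcomb; simp at this; linarith
        have hv2 : v.2 = 2*r := by
          have := congrArg Prod.snd hcomb; simp at this; linarith
        simp [dot2, hy, hv1, hv2]; ring
      refine ⟨hsub hv, fun u hu => ?_⟩
      rw [hval]
      refine hull_bound (c := 0) ?_ u hu
      rintro w (rfl | rfl | rfl) <;> simp [dot2, hy] <;> linarith
  have h4 : argmax2 P4 g = {((2:ℝ), (0:ℝ))} := by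
    have h20 : ((2:ℝ), (0:ℝ)) ∈ P4 := subset_convexHull ℝ _ (by simp)
    ext v
    simp only [argmax2, mem_setOf_eq, mem_singleton_iff]
    constructor
    · rintro ⟨hv, hmax⟩
      have hge := hmax _ h20
      rw [P4, convexHull_pair] at hv
      obtain ⟨a, b, ha, hb, hab, hcomb⟩ := hv
      have hv1 : v.1 = 2*a - 2*b := by
        have := congrArg Prod.fst hcomb; simp at this; linarith
      have hv2 : v.2 = 0 := by
        have := congrArg Prod.snd hcomb; simp at this; linarith
      simp only [dot2, hy] at hge
      rw [hv1, hv2] at hge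
      have hb0 : b = 0 := by nlinarith
      have e1 : v.1 = 2 := by rw [hv1]; linarith
      exact Prod.ext e1 hv2
    · rintro rfl
      refine ⟨h20, fun u hu => ?_⟩
      refine hull_bound (c := dot2 (2, 0) g) ?_ u hu
      rintro w (rfl | rfl) <;> simp [dot2, hy] <;> try linarith
  have hU : (⋃ P ∈ Ω0, argmax2 P g)
      = {((1:ℝ), (0:ℝ))} ∪ segment ℝ ((0:ℝ), (0:ℝ)) ((1:ℝ), (2:ℝ)) ∪ {((2:ℝ), (0:ℝ))} := by
    rw [Ω0]
    rw [show ({P1, P2, P3, P4} : Set (Set (ℝ × ℝ))) = insert P1 (insert P2 (insert P3 {P4}))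
      from rfl]
    rw [biUnion_insert, biUnion_insert, biUnion_insert, biUnion_singleton, h1, h2, h3, h4]
    ext w; simp [or_assoc]
  rw [polyConv, hU]
  apply le_antisymm
  · apply convexHull_min _ (convex_convexHull ℝ _)
    rintro w (hw | hw)
    · rcases hw with hw | hw
      · rw [mem_singleton_iff] at hw
        subst hw
        have hseg : segment ℝ ((0:ℝ), (0:ℝ)) ((2:ℝ), (0:ℝ))
            ⊆ convexHull ℝ ({(0, 0), (1, 2), (2, 0)} : Set (ℝ × ℝ)) := by
          rw [← convexHull_pair]
          exact convexHull_mono (by intro z hz; rcases hz with rfl | rfl <;> simp)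
        refine hseg ⟨1/2, 1/2, by norm_num, by norm_num, by norm_num, ?_⟩
        refine Prod.ext ?_ ?_ <;> simp <;> norm_num
      · have : segment ℝ ((0:ℝ), (0:ℝ)) ((1:ℝ), (2:ℝ))
            ⊆ convexHull ℝ ({(0, 0), (1, 2), (2, 0)} : Set (ℝ × ℝ)) := by
          rw [← convexHull_pair]
          exact convexHull_mono (by intro z hz; rcases hz with rfl | rfl <;> simp)
        exact this hw
    · rw [mem_singleton_iff] at hw
      subst hw
      exact subset_convexHull ℝ _ (by simp)
  · apply convexHull_min _ (convex_convexHull ℝ _)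
    rintro w (rfl | rfl | rfl)
    · exact subset_convexHull ℝ _ (Or.inl (Or.inr (left_mem_segment ℝ _ _)))
    · exact subset_convexHull ℝ _ (Or.inl (Or.inr (right_mem_segment ℝ _ _)))
    · exact subset_convexHull ℝ _ (Or.inr rfl)
end
end

section
/- Let Ω₁ be the family of polytopes consisting of conv{(-2,0),(2,0)}, conv{(0,0),(2,0)}, conv{(0,0),(1,2),(2,0)}, conv{(1,0),(1,2),(2,0)}, conv{(1,0),(-1,1),(1,2),(2,0)}, conv{(-1,1),(1,2),(2,0)}, conv{(-1,2),(1,2),(2,0),(-2,0)}, together with the reflections of these sets through the y-axis. For any g = (g_x,g_y) with g_x > 0 and -3g_x < g_y < 0, P_{Ω₁}(g) = conv{(-1,0),(1,1),(2,0)}. -/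
open Set

noncomputable section

def Ω1base : Set (Set (ℝ × ℝ)) :=
  { convexHull ℝ {(-2, 0), (2, 0)},
    convexHull ℝ {(0, 0), (2, 0)},
    convexHull ℝ {(0, 0), (1, 2), (2, 0)},
    convexHull ℝ {(1, 0), (1, 2), (2, 0)},
    convexHull ℝ {(1, 0), (-1, 1), (1, 2), (2, 0)},
    convexHull ℝ {(-1, 1), (1, 2), (2, 0)},
    convexHull ℝ {(-1, 2), (1, 2), (2, 0), (-2, 0)} }

def Ω1 : Set (Set (ℝ × ℝ)) := Ω1base ∪ (Set.image σ2) '' Ω1base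

lemma lin_dot2 (g : ℝ × ℝ) : IsLinearMap ℝ (fun x : ℝ × ℝ => dot2 x g) := by
  constructor
  · intro x y; simp [dot2]; ring
  · intro c x; simp [dot2]; ring

lemma hull_le_s16 {S : Set (ℝ × ℝ)} {v g : ℝ × ℝ} (h : ∀ u ∈ S, dot2 u g ≤ dot2 v g) :
    ∀ u ∈ convexHull ℝ S, dot2 u g ≤ dot2 v g := fun u hu =>
  convexHull_min h (convex_halfSpace_le (lin_dot2 g) _) hu

lemma mem_quad {p q r s x : ℝ × ℝ} (h : x ∈ convexHull ℝ ({p, q, r, s} : Set (ℝ × ℝ))) :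
    ∃ a b c d : ℝ, 0 ≤ a ∧ 0 ≤ b ∧ 0 ≤ c ∧ 0 ≤ d ∧ a + b + c + d = 1 ∧
      x.1 = a * p.1 + b * q.1 + c * r.1 + d * s.1 ∧
      x.2 = a * p.2 + b * q.2 + c * r.2 + d * s.2 := by
  rw [convexHull_insert (by exact ⟨q, by simp⟩), mem_convexJoin] at h
  obtain ⟨p', hp', z, hz, a1, a2, ha1, ha2, hA, hxz⟩ := h
  rw [mem_singleton_iff] at hp'; subst hp'
  rw [convexHull_insert (by exact ⟨r, by simp⟩), mem_convexJoin] at hz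
  obtain ⟨q', hq', w, hw, b1, b2, hb1, hb2, hB, hzw⟩ := hz
  rw [mem_singleton_iff] at hq'; subst hq'
  rw [convexHull_pair] at hw
  obtain ⟨c1, c2, hc1, hc2, hC, hwr⟩ := hw
  refine ⟨a1, a2*b1, a2*b2*c1, a2*b2*c2, ha1, by positivity, by positivity, by positivity,
    by linear_combination hA + a2*hB + a2*b2*hC, ?_, ?_⟩
  · have h1 := congrArg Prod.fst hxz
    have h2 := congrArg Prod.fst hzw
    have h3 := congrArg Prod.fst hwr
    simp at h1 h2 h3
    linear_combination -h1 - a2*h2 - a2*b2*h3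
  · have h1 := congrArg Prod.snd hxz
    have h2 := congrArg Prod.snd hzw
    have h3 := congrArg Prod.snd hwr
    simp at h1 h2 h3
    linear_combination -h1 - a2*h2 - a2*b2*h3

lemma argmax_two {p q r s g : ℝ × ℝ} (hr : dot2 r g < dot2 p g) (hs : dot2 s g < dot2 p g) :
    argmax2 (convexHull ℝ ({p, q, r, s} : Set (ℝ × ℝ))) g
      ⊆ convexHull ℝ ({p, q} : Set (ℝ × ℝ)) := by
  rintro x ⟨hx, hmax⟩
  obtain ⟨a, b, c, d, ha, hb, hc, hd, habcd, h1, h2⟩ := mem_quad hx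
  have hp := hmax p (subset_convexHull ℝ _ (by simp))
  have hq := hmax q (subset_convexHull ℝ _ (by simp))
  have hfx : dot2 x g = a * dot2 p g + b * dot2 q g + c * dot2 r g + d * dot2 s g := by
    simp only [dot2, h1, h2]; ring
  have hrx : dot2 r g < dot2 x g := lt_of_lt_of_le hr hp
  have hsx : dot2 s g < dot2 x g := lt_of_lt_of_le hs hp
  have key : a * (dot2 x g - dot2 p g) + b * (dot2 x g - dot2 q g)
      + c * (dot2 x g - dot2 r g) + d * (dot2 x g - dot2 s g) = 0 := by
    linear_combination (dot2 x g) * habcd + hfx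
  have t1 : 0 ≤ a * (dot2 x g - dot2 p g) := mul_nonneg ha (by linarith)
  have t2 : 0 ≤ b * (dot2 x g - dot2 q g) := mul_nonneg hb (by linarith)
  have t3 : 0 ≤ c * (dot2 x g - dot2 r g) := mul_nonneg hc (by linarith)
  have t4 : 0 ≤ d * (dot2 x g - dot2 s g) := mul_nonneg hd (by linarith)
  have hc0 : c = 0 := by
    by_contra h
    have hcpos : 0 < c := lt_of_le_of_ne hc (Ne.symm h)
    nlinarith [mul_pos hcpos (sub_pos.mpr hrx)]
  have hd0 : d = 0 := by
    by_contra h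
    have hdpos : 0 < d := lt_of_le_of_ne hd (Ne.symm h)
    nlinarith [mul_pos hdpos (sub_pos.mpr hsx)]
  rw [convexHull_pair]
  refine ⟨a, b, ha, hb, by linarith, ?_⟩
  apply Prod.ext <;> simp <;> [skip; skip] <;> subst hc0 hd0 <;> [linarith [h1]; linarith [h2]]

lemma argmax_one {p q r s g : ℝ × ℝ} (hq : dot2 q g < dot2 p g) (hr : dot2 r g < dot2 p g)
    (hs : dot2 s g < dot2 p g) :
    argmax2 (convexHull ℝ ({p, q, r, s} : Set (ℝ × ℝ))) g ⊆ {p} := by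
  intro x hxm
  rcases hxm with ⟨hx, hmax⟩
  obtain ⟨a, b, c, d, ha, hb, hc, hd, habcd, h1, h2⟩ := mem_quad hx
  have hp := hmax p (subset_convexHull ℝ _ (by simp))
  have hfx : dot2 x g = a * dot2 p g + b * dot2 q g + c * dot2 r g + d * dot2 s g := by
    simp only [dot2, h1, h2]; ring
  have hqx : dot2 q g < dot2 x g := lt_of_lt_of_le hq hp
  have hrx : dot2 r g < dot2 x g := lt_of_lt_of_le hr hp
  have hsx : dot2 s g < dot2 x g := lt_of_lt_of_le hs hp
  have key : a * (dot2 x g - dot2 p g) + b * (dot2 x g - dot2 q g)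
      + c * (dot2 x g - dot2 r g) + d * (dot2 x g - dot2 s g) = 0 := by
    linear_combination (dot2 x g) * habcd + hfx
  have t1 : 0 ≤ a * (dot2 x g - dot2 p g) := mul_nonneg ha (by linarith)
  have hb0 : b = 0 := by
    by_contra h'
    have : 0 < b := lt_of_le_of_ne hb (Ne.symm h')
    nlinarith [mul_pos this (sub_pos.mpr hqx), mul_nonneg hc (sub_nonneg.mpr hrx.le),
      mul_nonneg hd (sub_nonneg.mpr hsx.le)]
  have hc0 : c = 0 := by
    by_contra h'
    have : 0 < c := lt_of_le_of_ne hc (Ne.symm h')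
    nlinarith [mul_pos this (sub_pos.mpr hrx), mul_nonneg hb (sub_nonneg.mpr hqx.le),
      mul_nonneg hd (sub_nonneg.mpr hsx.le)]
  have hd0 : d = 0 := by
    by_contra h'
    have : 0 < d := lt_of_le_of_ne hd (Ne.symm h')
    nlinarith [mul_pos this (sub_pos.mpr hsx), mul_nonneg hb (sub_nonneg.mpr hqx.le),
      mul_nonneg hc (sub_nonneg.mpr hrx.le)]
  have ha1 : a = 1 := by linarith
  have : x = p := by
    apply Prod.ext <;> subst hb0 hc0 hd0 ha1 <;> simp at h1 h2 <;> [exact h1; exact h2]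
  simp [this]

lemma sigma_hull (S : Set (ℝ × ℝ)) : σ2 '' convexHull ℝ S = convexHull ℝ (σ2 '' S) := by
  have hlin : IsLinearMap ℝ σ2 := by
    constructor
    · intro x y; simp [σ2, Prod.ext_iff]; ring
    · intro c x; simp [σ2, Prod.ext_iff]
  exact hlin.image_convexHull S

theorem stmt16 (g : ℝ × ℝ) (hx : 0 < g.1) (hy1 : -3 * g.1 < g.2) (hy2 : g.2 < 0) :
    polyConv Ω1 g = convexHull ℝ {(-1, 0), (1, 1), (2, 0)} := by
  have hT : Convex ℝ (convexHull ℝ ({(-1, 0), (1, 1), (2, 0)} : Set (ℝ × ℝ))) :=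
    convex_convexHull ℝ _
  have hm1 : ((-1, 0) : ℝ × ℝ) ∈ convexHull ℝ ({(-1, 0), (1, 1), (2, 0)} : Set (ℝ × ℝ)) :=
    subset_convexHull ℝ _ (by simp)
  have hm2 : ((1, 1) : ℝ × ℝ) ∈ convexHull ℝ ({(-1, 0), (1, 1), (2, 0)} : Set (ℝ × ℝ)) :=
    subset_convexHull ℝ _ (by simp)
  have hm3 : ((2, 0) : ℝ × ℝ) ∈ convexHull ℝ ({(-1, 0), (1, 1), (2, 0)} : Set (ℝ × ℝ)) :=
    subset_convexHull ℝ _ (by simp)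
  have hm0 : ((0, 0) : ℝ × ℝ) ∈ convexHull ℝ ({(-1, 0), (1, 1), (2, 0)} : Set (ℝ × ℝ)) := by
    have := hT.segment_subset hm1 hm3
    apply this
    refine ⟨2/3, 1/3, by norm_num, by norm_num, by norm_num, ?_⟩
    simp [Prod.ext_iff]; norm_num
  apply Set.Subset.antisymm
  · -- ⊆
    apply convexHull_min _ hT
    apply Set.iUnion₂_subset
    intro P hP
    rcases hP with hP | ⟨Q, hQ, rfl⟩
    · simp only [Ω1base, mem_insert_iff, mem_singleton_iff] at hP
      rcases hP with rfl | rfl | rfl | rfl | rfl | rfl | rfl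
      · have hs : ({(-2, 0), (2, 0)} : Set (ℝ × ℝ)) = {(2, 0), (-2, 0), (-2, 0), (-2, 0)} := by
          ext u; simp; tauto
        rw [hs]
        refine (argmax_one ?_ ?_ ?_).trans (by simpa using hm3) <;> (simp [dot2]; try linarith)
      · have hs : ({(0, 0), (2, 0)} : Set (ℝ × ℝ)) = {(2, 0), (0, 0), (0, 0), (0, 0)} := by
          ext u; simp; tauto
        rw [hs]
        refine (argmax_one ?_ ?_ ?_).trans (by simpa using hm3) <;> (simp [dot2]; try linarith)
      · have hs : ({(0, 0), (1, 2), (2, 0)} : Set (ℝ × ℝ)) = {(2, 0), (0, 0), (1, 2), (1, 2)} := by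
          ext u; simp; tauto
        rw [hs]
        refine (argmax_one ?_ ?_ ?_).trans (by simpa using hm3) <;> (simp [dot2]; try linarith)
      · have hs : ({(1, 0), (1, 2), (2, 0)} : Set (ℝ × ℝ)) = {(2, 0), (1, 0), (1, 2), (1, 2)} := by
          ext u; simp; tauto
        rw [hs]
        refine (argmax_one ?_ ?_ ?_).trans (by simpa using hm3) <;> (simp [dot2]; try linarith)
      · have hs : ({(1, 0), (-1, 1), (1, 2), (2, 0)} : Set (ℝ × ℝ))
            = {(2, 0), (1, 0), (-1, 1), (1, 2)} := by
          ext u; simp; tauto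
        rw [hs]
        refine (argmax_one ?_ ?_ ?_).trans (by simpa using hm3) <;> (simp [dot2]; try linarith)
      · have hs : ({(-1, 1), (1, 2), (2, 0)} : Set (ℝ × ℝ)) = {(2, 0), (-1, 1), (1, 2), (1, 2)} := by
          ext u; simp; tauto
        rw [hs]
        refine (argmax_one ?_ ?_ ?_).trans (by simpa using hm3) <;> (simp [dot2]; try linarith)
      · have hs : ({(-1, 2), (1, 2), (2, 0), (-2, 0)} : Set (ℝ × ℝ))
            = {(2, 0), (-1, 2), (1, 2), (-2, 0)} := by
          ext u; simp; tauto
        rw [hs]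
        refine (argmax_one ?_ ?_ ?_).trans (by simpa using hm3) <;> (simp [dot2]; try linarith)
    · simp only [Ω1base, mem_insert_iff, mem_singleton_iff] at hQ
      rcases hQ with rfl | rfl | rfl | rfl | rfl | rfl | rfl <;> rw [sigma_hull]
      · have hs : σ2 '' ({(-2, 0), (2, 0)} : Set (ℝ × ℝ))
            = {(2, 0), (-2, 0), (-2, 0), (-2, 0)} := by
          norm_num [Set.image_insert_eq, σ2] <;> (ext u; simp; tauto)
        rw [hs]
        refine (argmax_one ?_ ?_ ?_).trans (by simpa using hm3) <;> (simp [dot2]; try linarith)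
      · have hs : σ2 '' ({(0, 0), (2, 0)} : Set (ℝ × ℝ)) = {(0, 0), (-2, 0), (-2, 0), (-2, 0)} := by
          norm_num [Set.image_insert_eq, σ2] <;> (ext u; simp; tauto)
        rw [hs]
        refine (argmax_one ?_ ?_ ?_).trans (by simpa using hm0) <;> (simp [dot2]; try linarith)
      · have hs : σ2 '' ({(0, 0), (1, 2), (2, 0)} : Set (ℝ × ℝ))
            = {(0, 0), (-1, 2), (-2, 0), (-2, 0)} := by
          norm_num [Set.image_insert_eq, σ2] <;> (ext u; simp; tauto)
        rw [hs]
        refine (argmax_one ?_ ?_ ?_).trans (by simpa using hm0) <;> (simp [dot2]; try linarith)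
      · have hs : σ2 '' ({(1, 0), (1, 2), (2, 0)} : Set (ℝ × ℝ))
            = {(-1, 0), (-1, 2), (-2, 0), (-2, 0)} := by
          norm_num [Set.image_insert_eq, σ2] <;> (ext u; simp; tauto)
        rw [hs]
        refine (argmax_one ?_ ?_ ?_).trans (by simpa using hm1) <;> (simp [dot2]; try linarith)
      · have hs : σ2 '' ({(1, 0), (-1, 1), (1, 2), (2, 0)} : Set (ℝ × ℝ))
            = {(-1, 0), (1, 1), (-1, 2), (-2, 0)} := by
          norm_num [Set.image_insert_eq, σ2] <;> (ext u; simp; tauto)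
        rw [hs]
        refine (argmax_two ?_ ?_).trans (convexHull_mono ?_)
        · simp [dot2]; linarith
        · simp [dot2]; linarith
        · intro u hu; simp at hu; rcases hu with rfl | rfl <;> simp
      · have hs : σ2 '' ({(-1, 1), (1, 2), (2, 0)} : Set (ℝ × ℝ))
            = {(1, 1), (-1, 2), (-2, 0), (-2, 0)} := by
          norm_num [Set.image_insert_eq, σ2] <;> (ext u; simp; tauto)
        rw [hs]
        refine (argmax_one ?_ ?_ ?_).trans (by simpa using hm2) <;> (simp [dot2]; try linarith)
      · have hs : σ2 '' ({(-1, 2), (1, 2), (2, 0), (-2, 0)} : Set (ℝ × ℝ))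
            = {(2, 0), (1, 2), (-1, 2), (-2, 0)} := by
          norm_num [Set.image_insert_eq, σ2] <;> (ext u; simp; tauto)
        rw [hs]
        refine (argmax_one ?_ ?_ ?_).trans (by simpa using hm3) <;> (simp [dot2]; try linarith)
  · -- ⊇
    apply convexHull_min _ (convex_convexHull ℝ _)
    intro x hxmem
    apply subset_convexHull
    simp only [mem_insert_iff, mem_singleton_iff] at hxmem
    rcases hxmem with rfl | rfl | rfl
    · -- (-1,0)
      refine mem_iUnion₂.mpr ⟨σ2 '' convexHull ℝ {(1, 0), (1, 2), (2, 0)},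
        Or.inr ⟨_, by simp [Ω1base], rfl⟩, ?_⟩
      have hs : σ2 '' convexHull ℝ ({(1, 0), (1, 2), (2, 0)} : Set (ℝ × ℝ))
          = convexHull ℝ ({(-1, 0), (-1, 2), (-2, 0)} : Set (ℝ × ℝ)) := by
        rw [sigma_hull]
        congr 1
        norm_num [Set.image_insert_eq, σ2] <;> (ext u; simp; tauto)
      rw [hs]
      refine ⟨subset_convexHull ℝ _ (by simp), hull_le_s16 ?_⟩
      intro u hu
      simp only [mem_insert_iff, mem_singleton_iff] at hu
      rcases hu with rfl | rfl | rfl <;> (simp [dot2]; try linarith)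
    · -- (1,1)
      refine mem_iUnion₂.mpr ⟨σ2 '' convexHull ℝ {(-1, 1), (1, 2), (2, 0)},
        Or.inr ⟨_, by simp [Ω1base], rfl⟩, ?_⟩
      have hs : σ2 '' convexHull ℝ ({(-1, 1), (1, 2), (2, 0)} : Set (ℝ × ℝ))
          = convexHull ℝ ({(1, 1), (-1, 2), (-2, 0)} : Set (ℝ × ℝ)) := by
        rw [sigma_hull]
        congr 1
        norm_num [Set.image_insert_eq, σ2] <;> (ext u; simp; tauto)
      rw [hs]
      refine ⟨subset_convexHull ℝ _ (by simp), hull_le_s16 ?_⟩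
      intro u hu
      simp only [mem_insert_iff, mem_singleton_iff] at hu
      rcases hu with rfl | rfl | rfl <;> (simp [dot2]; try linarith)
    · -- (2,0)
      refine mem_iUnion₂.mpr ⟨convexHull ℝ {(-2, 0), (2, 0)},
        Or.inl (by simp [Ω1base]), ?_⟩
      refine ⟨subset_convexHull ℝ _ (by simp), hull_le_s16 ?_⟩
      intro u hu
      simp only [mem_insert_iff, mem_singleton_iff] at hu
      rcases hu with rfl | rfl <;> (simp [dot2]; try linarith)
end
end
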